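/- arXiv:1708.07482 — 2 statements merged into one kernel-verified Lean document; each statement's English description precedes it below -/
import Mathlib

section
/- Let Φ : [0,∞) → ℝ be a Young function, i.e. Φ(t) = ∫₀ᵗ φ(s) ds where φ : [0,∞) → ℝ is right-continuous, nondecreasing, φ(0) = 0, φ(s) > 0 for s > 0, and φ(s) → ∞ as s → ∞. Then there exists a Young function Φ₁ such that Φ(x) ≤ Φ₁(x) for all x ≥ 0, and for every c > 0 the function x ↦ Φ(cx)/Φ₁(x) is bounded on (0,∞). -/
open Set Filter MeasureTheory

lemma aux_intInt {ψ : ℝ → ℝ} (hm : MonotoneOn ψ (Set.Ici 0)) {a b : ℝ}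
    (ha : 0 ≤ a) (hab : a ≤ b) : IntervalIntegrable ψ MeasureTheory.volume a b := by
  apply MonotoneOn.intervalIntegrable
  apply hm.mono
  rw [uIcc_of_le hab]
  exact fun t ht => le_trans ha ht.1

lemma aux_nonneg {ψ : ℝ → ℝ} (hm : MonotoneOn ψ (Set.Ici 0)) (h0 : ψ 0 = 0)
    {s : ℝ} (hs : 0 ≤ s) : 0 ≤ ψ s := h0 ▸ hm self_mem_Ici hs hs

lemma aux_upper {ψ : ℝ → ℝ} (hm : MonotoneOn ψ (Set.Ici 0)) {x : ℝ} (hx : 0 ≤ x) :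
    (∫ s in (0:ℝ)..x, ψ s) ≤ x * ψ x := by
  have h : (∫ s in (0:ℝ)..x, ψ s) ≤ ∫ _s in (0:ℝ)..x, ψ x := by
    apply intervalIntegral.integral_mono_on hx (aux_intInt hm le_rfl hx) intervalIntegrable_const
    intro s hs
    exact hm hs.1 hx hs.2
  simpa using h

lemma aux_lower {ψ : ℝ → ℝ} (hm : MonotoneOn ψ (Set.Ici 0)) (h0 : ψ 0 = 0) {x : ℝ}
    (hx : 0 ≤ x) : x / 2 * ψ (x / 2) ≤ ∫ s in (0:ℝ)..x, ψ s := by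
  have h2 : (0:ℝ) ≤ x / 2 := by linarith
  have h2x : x / 2 ≤ x := by linarith
  have hsplit : (∫ s in (0:ℝ)..x, ψ s)
      = (∫ s in (0:ℝ)..x/2, ψ s) + ∫ s in (x/2)..x, ψ s :=
    (intervalIntegral.integral_add_adjacent_intervals (aux_intInt hm le_rfl h2)
      (aux_intInt hm h2 h2x)).symm
  have h1 : 0 ≤ ∫ s in (0:ℝ)..x/2, ψ s :=
    intervalIntegral.integral_nonneg h2 (fun u hu => aux_nonneg hm h0 hu.1)
  have hlow : (∫ _s in (x/2)..x, ψ (x/2)) ≤ ∫ s in (x/2)..x, ψ s := by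
    apply intervalIntegral.integral_mono_on h2x intervalIntegrable_const (aux_intInt hm h2 h2x)
    intro s hs
    exact hm h2 (le_trans h2 hs.1) hs.1
  have hc : (∫ _s in (x/2)..x, ψ (x/2)) = x/2 * ψ (x/2) := by
    rw [intervalIntegral.integral_const, smul_eq_mul]
    ring
  linarith [hlow, h1, hsplit.ge, hc.symm.le]

lemma aux_mono {ψ : ℝ → ℝ} (hm : MonotoneOn ψ (Set.Ici 0)) (h0 : ψ 0 = 0) {a b : ℝ}
    (ha : 0 ≤ a) (hab : a ≤ b) :
    (∫ s in (0:ℝ)..a, ψ s) ≤ ∫ s in (0:ℝ)..b, ψ s := by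
  have hsplit : (∫ s in (0:ℝ)..b, ψ s)
      = (∫ s in (0:ℝ)..a, ψ s) + ∫ s in a..b, ψ s :=
    (intervalIntegral.integral_add_adjacent_intervals (aux_intInt hm le_rfl ha)
      (aux_intInt hm ha hab)).symm
  have h1 : 0 ≤ ∫ s in a..b, ψ s :=
    intervalIntegral.integral_nonneg hab (fun u hu => aux_nonneg hm h0 (le_trans ha hu.1))
  linarith

lemma aux_le_g {s : ℝ} (hs : 0 ≤ s) : s ≤ s ^ 2 + Real.sqrt s := by
  have ht : 0 ≤ Real.sqrt s := Real.sqrt_nonneg s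
  have h2 : Real.sqrt s ^ 2 = s := Real.sq_sqrt hs
  nlinarith [mul_nonneg ht (sq_nonneg (Real.sqrt s - 1)), sq_nonneg (Real.sqrt s - 1)]

lemma aux_g_nonneg {s : ℝ} (hs : 0 ≤ s) : 0 ≤ s ^ 2 + Real.sqrt s :=
  add_nonneg (sq_nonneg s) (Real.sqrt_nonneg s)

lemma aux_g_mono : MonotoneOn (fun s : ℝ => s ^ 2 + Real.sqrt s) (Set.Ici 0) := by
  intro a ha b hb hab
  have : a ^ 2 ≤ b ^ 2 := pow_le_pow_left₀ ha hab 2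
  have := Real.sqrt_le_sqrt hab
  dsimp only
  linarith


/-- `Φ` is a Young function generated by `φ`. -/
def IsYoungPair (φ Φ : ℝ → ℝ) : Prop :=
  (∀ s ∈ Set.Ici (0:ℝ), ContinuousWithinAt φ (Set.Ici s) s) ∧
  MonotoneOn φ (Set.Ici 0) ∧
  φ 0 = 0 ∧
  (∀ s > (0:ℝ), 0 < φ s) ∧
  Filter.Tendsto φ Filter.atTop Filter.atTop ∧
  (∀ t ≥ (0:ℝ), Φ t = ∫ s in (0:ℝ)..t, φ s)

theorem stmt0 (φ Φ : ℝ → ℝ) (hY : IsYoungPair φ Φ) :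
    ∃ φ₁ Φ₁ : ℝ → ℝ, IsYoungPair φ₁ Φ₁ ∧
      (∀ x ≥ (0:ℝ), Φ x ≤ Φ₁ x) ∧
      (∀ c > (0:ℝ), ∃ M : ℝ, ∀ x > (0:ℝ), Φ (c * x) / Φ₁ x ≤ M) := by
  obtain ⟨hcont, hmono, h0, hpos, htop, hΦ⟩ := hY
  set g : ℝ → ℝ := fun s => s ^ 2 + Real.sqrt s with hg
  set φ₁ : ℝ → ℝ := fun s => φ (g s) with hφ₁
  set Φ₁ : ℝ → ℝ := fun x => ∫ s in (0:ℝ)..x, φ₁ s with hΦ₁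
  have hφ₁0 : φ₁ 0 = 0 := by
    simp only [hφ₁, hg]
    norm_num [h0]
  have hφ₁mono : MonotoneOn φ₁ (Set.Ici 0) := by
    intro a ha b hb hab
    exact hmono (aux_g_nonneg ha) (aux_g_nonneg hb) (aux_g_mono ha hb hab)
  have hgcont : Continuous g := (continuous_pow 2).add Real.continuous_sqrt
  refine ⟨φ₁, Φ₁, ⟨?_, hφ₁mono, hφ₁0, ?_, ?_, fun t ht => rfl⟩, ?_, ?_⟩
  · -- right continuity
    intro s hs
    have : ContinuousWithinAt φ (Set.Ici (g s)) (g s) := hcont (g s) (aux_g_nonneg hs)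
    exact this.comp hgcont.continuousAt.continuousWithinAt
      (fun t ht => aux_g_mono hs (mem_Ici.mpr (le_trans hs ht)) ht)
  · -- positivity
    intro s hs
    apply hpos
    have := aux_le_g hs.le
    exact lt_of_lt_of_le hs this
  · -- tendsto atTop
    have hgt : Filter.Tendsto g Filter.atTop Filter.atTop := by
      apply tendsto_atTop_mono' Filter.atTop _ tendsto_id
      filter_upwards [Filter.eventually_ge_atTop (0:ℝ)] with s hs
      exact aux_le_g hs
    exact htop.comp hgt
  · -- Φ ≤ Φ₁
    intro x hx
    rw [hΦ x hx]
    apply intervalIntegral.integral_mono_on hx (aux_intInt hmono le_rfl hx)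
      (aux_intInt hφ₁mono le_rfl hx)
    intro s hs
    exact hmono hs.1 (aux_g_nonneg hs.1) (aux_le_g hs.1)
  · -- boundedness
    intro c hc
    set a : ℝ := 1 / (2 * c ^ 2) with ha
    have ha0 : 0 < a := by positivity
    have hΦ₁a : 0 < Φ₁ a := by
      have hl := aux_lower hφ₁mono hφ₁0 ha0.le
      have : 0 < a / 2 * φ₁ (a / 2) := by
        apply mul_pos (by linarith)
        apply hpos
        exact lt_of_lt_of_le (by linarith) (aux_le_g (by linarith))
      linarith
    refine ⟨max (2 * c) (Φ (c * (4 * c)) / Φ₁ a), fun x hx => ?_⟩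
    have hΦ₁x : 0 < Φ₁ x := by
      have hl := aux_lower hφ₁mono hφ₁0 hx.le
      have : 0 < x / 2 * φ₁ (x / 2) := by
        apply mul_pos (by linarith)
        apply hpos
        exact lt_of_lt_of_le (by linarith) (aux_le_g (by linarith))
      linarith
    rw [div_le_iff₀ hΦ₁x]
    have hcx : 0 ≤ c * x := by positivity
    -- good case : c*x ≤ g (x/2)
    have good : c * x ≤ g (x / 2) → Φ (c * x) ≤ max (2 * c) (Φ (c * (4 * c)) / Φ₁ a) * Φ₁ x := by
      intro hgood
      have h1 : Φ (c * x) ≤ c * x * φ (c * x) := by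
        rw [hΦ (c * x) hcx]; exact aux_upper hmono hcx
      have h2 : φ (c * x) ≤ φ₁ (x / 2) :=
        hmono hcx (aux_g_nonneg (by linarith)) hgood
      have h3 : x / 2 * φ₁ (x / 2) ≤ Φ₁ x := aux_lower hφ₁mono hφ₁0 hx.le
      have h4 : Φ (c * x) ≤ 2 * c * Φ₁ x := by
        have : c * x * φ (c * x) ≤ c * x * φ₁ (x / 2) :=
          mul_le_mul_of_nonneg_left h2 hcx
        have heq : c * x * φ₁ (x / 2) = 2 * c * (x / 2 * φ₁ (x / 2)) := by ring
        nlinarith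
      calc Φ (c * x) ≤ 2 * c * Φ₁ x := h4
        _ ≤ max (2 * c) (Φ (c * (4 * c)) / Φ₁ a) * Φ₁ x :=
          mul_le_mul_of_nonneg_right (le_max_left _ _) hΦ₁x.le
    by_cases hxa : x ≤ a
    · apply good
      have hsq : c * x ≤ Real.sqrt (x / 2) := by
        rw [show c * x = Real.sqrt ((c * x) ^ 2) from (Real.sqrt_sq hcx).symm]
        apply Real.sqrt_le_sqrt
        have h2c : x * (2 * c ^ 2) ≤ 1 :=
          (le_div_iff₀ (show (0:ℝ) < 2 * c ^ 2 by positivity)).mp hxa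
        nlinarith [mul_le_mul_of_nonneg_left h2c (show (0:ℝ) ≤ x / 2 by linarith)]
      have : (0:ℝ) ≤ (x / 2) ^ 2 := sq_nonneg _
      simp only [hg]
      linarith
    · by_cases hxb : 4 * c ≤ x
      · apply good
        have hsq : c * x ≤ (x / 2) ^ 2 := by nlinarith
        have : 0 ≤ Real.sqrt (x / 2) := Real.sqrt_nonneg _
        simp only [hg]
        linarith
      · -- middle case : a < x < 4 * c
        push_neg at hxa hxb
        have hm1 : Φ (c * x) ≤ Φ (c * (4 * c)) := by
          rw [hΦ (c * x) hcx, hΦ (c * (4 * c)) (by positivity)]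
          exact aux_mono hmono h0 hcx (by nlinarith)
        have hm2 : Φ₁ a ≤ Φ₁ x := aux_mono hφ₁mono hφ₁0 ha0.le hxa.le
        have hM : Φ (c * (4 * c)) / Φ₁ a ≤ max (2 * c) (Φ (c * (4 * c)) / Φ₁ a) :=
          le_max_right _ _
        have hΦ4 : 0 ≤ Φ (c * (4 * c)) := by
          rw [hΦ (c * (4 * c)) (by positivity)]
          exact intervalIntegral.integral_nonneg (by positivity)
            (fun u hu => aux_nonneg hmono h0 hu.1)
        calc Φ (c * x) ≤ Φ (c * (4 * c)) := hm1
          _ = Φ (c * (4 * c)) / Φ₁ a * Φ₁ a := by field_simp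
          _ ≤ max (2 * c) (Φ (c * (4 * c)) / Φ₁ a) * Φ₁ x := by
            apply mul_le_mul hM hm2 hΦ₁a.le
            exact le_trans (by positivity) hM
end

section
/- There is no constant C > 0 with the following property: for every t > 0 and every bounded Bochner-measurable u : (0,t) → L¹(0,∞), ‖∫₀ᵗ T(s)u(s) ds‖_{L¹} ≤ C·sup_{s∈(0,t)}‖u(s)‖_{L¹}, where (T(t)) is the left-translation semigroup on L¹(0,∞). That is, the system ẋ = Ax + u with A the generator of left translation on L¹(0,∞) and B = I is not infinite-time admissible with respect to L^∞. -/
open Set Filter MeasureTheory Real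

/-- The left-translation semigroup on L¹(0,∞) with B = I is not infinite-time
admissible with respect to L^∞: there is no uniform-in-time constant C bounding
‖∫₀ᵗ T(s)u(s) ds‖_{L¹} by C·sup_{s∈(0,t)}‖u(s)‖_{L¹}. Here (T(s)u(s))(r) = u(s)(s+r). -/
theorem stmt14 :
    ¬ ∃ C > (0:ℝ), ∀ t > (0:ℝ), ∀ u : ℝ → ℝ → ℝ,
      Measurable (Function.uncurry u) →
      (∀ s ∈ Set.Ioc (0:ℝ) t, MeasureTheory.IntegrableOn (u s) (Set.Ioi 0)) →
      MeasureTheory.IntegrableOn (fun p : ℝ × ℝ => u p.1 (p.1 + p.2))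
        ((Set.Ioc (0:ℝ) t) ×ˢ (Set.Ioi (0:ℝ))) →
      ∀ M : ℝ, (∀ s ∈ Set.Ioc (0:ℝ) t, ∫ r in Set.Ioi (0:ℝ), |u s r| ≤ M) →
      ∫ r in Set.Ioi (0:ℝ), |∫ s in Set.Ioc (0:ℝ) t, u s (s + r)| ≤ C * M := by
  rintro ⟨C, hC, h⟩
  set t : ℝ := C + 1 with ht_def
  have ht : (0:ℝ) < t := by positivity
  set u : ℝ → ℝ → ℝ := fun s r => if r ∈ Set.Ioc s (s+1) then 1 else 0 with hu
  -- measurability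
  have hmeas : Measurable (Function.uncurry u) := by
    have : Function.uncurry u =
        fun p : ℝ × ℝ => if p.1 < p.2 ∧ p.2 ≤ p.1 + 1 then (1:ℝ) else 0 := rfl
    rw [this]
    exact Measurable.ite
      ((measurableSet_lt measurable_fst measurable_snd).inter
        (measurableSet_le measurable_snd (measurable_fst.add_const 1)))
      measurable_const measurable_const
  -- u s = indicator
  have hind : ∀ s : ℝ, u s = (Set.Ioc s (s+1)).indicator (fun _ => (1:ℝ)) := by
    intro s; funext r; simp [hu, Set.indicator_apply]
  have h1 : ∀ s ∈ Set.Ioc (0:ℝ) t, MeasureTheory.IntegrableOn (u s) (Set.Ioi 0) := by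
    intro s _
    rw [hind s]
    apply MeasureTheory.Integrable.integrableOn
    rw [MeasureTheory.integrable_indicator_iff measurableSet_Ioc]
    exact (integrableOn_const_iff (C := (1:ℝ))).2 (Or.inr measure_Ioc_lt_top)
  -- the shifted function is indicator of {p | p.2 ∈ Ioc 0 1}
  have hshift : (fun p : ℝ × ℝ => u p.1 (p.1 + p.2)) =
      ({p : ℝ × ℝ | p.2 ∈ Set.Ioc (0:ℝ) 1}).indicator (fun _ => (1:ℝ)) := by
    funext p
    simp [hu, Set.indicator_apply, Set.mem_Ioc]
  have hsetmeas : MeasurableSet {p : ℝ × ℝ | p.2 ∈ Set.Ioc (0:ℝ) 1} :=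
    measurable_snd measurableSet_Ioc
  have h2 : MeasureTheory.IntegrableOn (fun p : ℝ × ℝ => u p.1 (p.1 + p.2))
      ((Set.Ioc (0:ℝ) t) ×ˢ (Set.Ioi (0:ℝ))) := by
    rw [hshift, MeasureTheory.IntegrableOn, MeasureTheory.integrable_indicator_iff hsetmeas]
    apply (integrableOn_const_iff (C := (1:ℝ))).2
    right
    rw [MeasureTheory.Measure.restrict_apply hsetmeas]
    calc volume ({p : ℝ × ℝ | p.2 ∈ Set.Ioc (0:ℝ) 1} ∩ (Set.Ioc (0:ℝ) t) ×ˢ (Set.Ioi (0:ℝ)))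
        ≤ volume ((Set.Ioc (0:ℝ) t) ×ˢ (Set.Ioc (0:ℝ) 1)) := by
          apply measure_mono
          rintro ⟨a, b⟩ ⟨hb, ha, _⟩
          exact ⟨ha, hb⟩
      _ < ⊤ := by
          rw [Measure.volume_eq_prod, Measure.prod_prod]
          exact ENNReal.mul_lt_top measure_Ioc_lt_top measure_Ioc_lt_top
  -- M = 1 works
  have hM : ∀ s ∈ Set.Ioc (0:ℝ) t, ∫ r in Set.Ioi (0:ℝ), |u s r| ≤ (1:ℝ) := by
    intro s hs
    have habs : ∀ r, |u s r| = u s r := by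
      intro r; apply abs_of_nonneg; simp only [hu]; positivity
    simp only [habs]
    rw [hind s, MeasureTheory.setIntegral_indicator measurableSet_Ioc]
    rw [MeasureTheory.setIntegral_const]
    have hsub : Set.Ioi (0:ℝ) ∩ Set.Ioc s (s+1) = Set.Ioc s (s+1) := by
      apply Set.inter_eq_self_of_subset_right
      intro r hr
      exact lt_trans hs.1 hr.1
    rw [hsub]
    simp [Real.volume_Ioc]
  have key := h t ht u hmeas h1 h2 1 hM
  -- compute the LHS
  have hinner : ∀ r : ℝ, (∫ s in Set.Ioc (0:ℝ) t, u s (s + r)) =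
      if r ∈ Set.Ioc (0:ℝ) 1 then t else 0 := by
    intro r
    have : ∀ s : ℝ, u s (s + r) = if r ∈ Set.Ioc (0:ℝ) 1 then (1:ℝ) else 0 := by
      intro s; simp [hu, Set.mem_Ioc]
    simp only [this]
    rw [MeasureTheory.setIntegral_const]
    rw [Real.volume_real_Ioc_of_le ht.le]
    by_cases hr : r ∈ Set.Ioc (0:ℝ) 1 <;> simp [hr, ENNReal.toReal_ofReal ht.le]
  have hLHS : (∫ r in Set.Ioi (0:ℝ), |∫ s in Set.Ioc (0:ℝ) t, u s (s + r)|) = t := by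
    have : (fun r => |∫ s in Set.Ioc (0:ℝ) t, u s (s + r)|) =
        (Set.Ioc (0:ℝ) 1).indicator (fun _ => t) := by
      funext r
      rw [hinner r]
      by_cases hr : r ∈ Set.Ioc (0:ℝ) 1 <;>
        simp [hr, Set.indicator_apply, abs_of_nonneg ht.le]
    rw [this, MeasureTheory.setIntegral_indicator measurableSet_Ioc,
      MeasureTheory.setIntegral_const]
    have hsub : Set.Ioi (0:ℝ) ∩ Set.Ioc 0 1 = Set.Ioc (0:ℝ) 1 := by
      apply Set.inter_eq_self_of_subset_right
      intro r hr; exact hr.1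
    rw [hsub, Real.volume_real_Ioc_of_le zero_le_one]
    simp
  rw [hLHS, mul_one] at key
  linarith
end
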